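/- arXiv:0903.4274 — 4 statements merged into one kernel-verified Lean document; each statement's English description precedes it below -/
import Mathlib

section
/- Let H be an N×N real symmetric tridiagonal matrix with diagonal entries B_1,…,B_N and off-diagonal entries J_1,…,J_{N-1}. If there exist a time t_0 > 0 and phase φ such that exp(-i t_0 H) e_1 = e^{iφ} e_N (where e_1, e_N are the first and last standard basis vectors), then B_n = B_{N+1-n} for all n and J_n² = J_{N-n}² for all n. -/
open Matrix

/-- The `N × N` real symmetric tridiagonal matrix (as a complex matrix) with diagonal
entries `B 0, …, B (N-1)` and off-diagonal entries `J 0, …, J (N-2)`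
(`J n` couples sites `n` and `n+1`, 0-indexed). -/
noncomputable def triC (N : ℕ) (B J : ℕ → ℝ) : Matrix (Fin N) (Fin N) ℂ :=
  Matrix.of fun i j =>
    if (i : ℕ) = j then (B i : ℂ)
    else if (i : ℕ) + 1 = j then (J i : ℂ)
    else if (j : ℕ) + 1 = i then (J j : ℂ)
    else 0

/-- The real version of `triC`. -/
noncomputable def triR (N : ℕ) (B J : ℕ → ℝ) : Matrix (Fin N) (Fin N) ℝ :=
  Matrix.of fun i j =>
    if (i : ℕ) = j then B i
    else if (i : ℕ) + 1 = j then J i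
    else if (j : ℕ) + 1 = i then J j
    else 0

namespace PSTaux

lemma nm1_lt {N : ℕ} (hN : 0 < N) : N - 1 < N := by omega

open Finset


/-- the ℕ-indexed Krylov sequence of a (half-infinite) tridiagonal operator applied to e₀ -/
noncomputable def useq (B J : ℕ → ℝ) : ℕ → ℕ → ℝ
  | 0 => fun j => if j = 0 then 1 else 0
  | m+1 => fun j =>
      J j * useq B J m (j+1) + B j * useq B J m j +
        if j = 0 then 0 else J (j-1) * useq B J m (j-1)

lemma useq_supp (B J : ℕ → ℝ) : ∀ m j, m < j → useq B J m j = 0 := by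
  intro m
  induction m with
  | zero =>
    intro j hj
    simp only [useq]
    rw [if_neg (by omega)]
  | succ m ih =>
    intro j hj
    have hj0 : j ≠ 0 := by omega
    simp only [useq]
    rw [ih (j+1) (by omega), ih j (by omega), if_neg hj0, ih (j-1) (by omega)]
    ring

lemma useq_lead (B J : ℕ → ℝ) : ∀ m, useq B J m m = ∏ i ∈ Finset.range m, J i := by
  intro m
  induction m with
  | zero => simp [useq]
  | succ m ih =>
    simp only [useq]
    rw [useq_supp B J m (m+1+1) (by omega), useq_supp B J m (m+1) (by omega),
      if_neg (by omega), Nat.add_sub_cancel, ih, Finset.prod_range_succ]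
    ring

lemma useq_congr (B J B' J' : ℕ → ℝ) (k : ℕ)
    (hB : ∀ i, i < k → B i = B' i) (hJ : ∀ i, i < k → J i = J' i) :
    ∀ m, m ≤ k → useq B J m = useq B' J' m := by
  intro m
  induction m with
  | zero => intro _; rfl
  | succ m ih =>
    intro hm
    have ihm := ih (by omega)
    funext j
    simp only [useq, ihm]
    have h1 : J j * useq B' J' m (j+1) = J' j * useq B' J' m (j+1) := by
      by_cases h : useq B' J' m (j+1) = 0
      · rw [h]; ring
      · have hle : j + 1 ≤ m := by
          by_contra hc; exact h (useq_supp _ _ m (j+1) (by omega))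
        rw [hJ j (by omega)]
    have h2 : B j * useq B' J' m j = B' j * useq B' J' m j := by
      by_cases h : useq B' J' m j = 0
      · rw [h]; ring
      · have hle : j ≤ m := by
          by_contra hc; exact h (useq_supp _ _ m j (by omega))
        rw [hB j (by omega)]
    have h3 : (if j = 0 then (0:ℝ) else J (j-1) * useq B' J' m (j-1))
        = (if j = 0 then 0 else J' (j-1) * useq B' J' m (j-1)) := by
      by_cases hj0 : j = 0
      · rw [if_pos hj0, if_pos hj0]
      · rw [if_neg hj0, if_neg hj0]
        by_cases h : useq B' J' m (j-1) = 0
        · rw [h]; ring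
        · have hle : j - 1 ≤ m := by
            by_contra hc; exact h (useq_supp _ _ m (j-1) (by omega))
          rw [hJ (j-1) (by omega)]
    rw [h1, h2, h3]

section offsite

variable (B J B' J' : ℕ → ℝ) (k : ℕ)

lemma useq_succ_offsite (hB : ∀ i, i < k → B i = B' i) (hJ : ∀ i, i < k → J i = J' i)
    {j : ℕ} (hjk : j ≠ k) (hjk1 : j ≠ k + 1) :
    useq B J (k+1) j = useq B' J' (k+1) j := by
  have huk : useq B J k = useq B' J' k := useq_congr B J B' J' k hB hJ k le_rfl
  simp only [useq, huk]
  have h1 : J j * useq B' J' k (j+1) = J' j * useq B' J' k (j+1) := by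
    by_cases h : useq B' J' k (j+1) = 0
    · rw [h]; ring
    · have hle : j + 1 ≤ k := by
        by_contra hc; exact h (useq_supp _ _ k (j+1) (by omega))
      rw [hJ j (by omega)]
  have h2 : B j * useq B' J' k j = B' j * useq B' J' k j := by
    by_cases h : useq B' J' k j = 0
    · rw [h]; ring
    · have hle : j ≤ k := by
        by_contra hc; exact h (useq_supp _ _ k j (by omega))
      rw [hB j (by omega)]
  have h3 : (if j = 0 then (0:ℝ) else J (j-1) * useq B' J' k (j-1))
      = (if j = 0 then 0 else J' (j-1) * useq B' J' k (j-1)) := by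
    by_cases hj0 : j = 0
    · rw [if_pos hj0, if_pos hj0]
    · rw [if_neg hj0, if_neg hj0]
      by_cases h : useq B' J' k (j-1) = 0
      · rw [h]; ring
      · have hle : j - 1 ≤ k := by
          by_contra hc; exact h (useq_supp _ _ k (j-1) (by omega))
        rw [hJ (j-1) (by omega)]
  rw [h1, h2, h3]

lemma useq_succ_at_k (hB : ∀ i, i < k → B i = B' i) (hJ : ∀ i, i < k → J i = J' i) :
    useq B J (k+1) k - useq B' J' (k+1) k = (B k - B' k) * useq B J k k := by
  have huk : useq B J k = useq B' J' k := useq_congr B J B' J' k hB hJ k le_rfl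
  simp only [useq, huk]
  rw [useq_supp B' J' k (k+1) (by omega)]
  have h3 : (if k = 0 then (0:ℝ) else J (k-1) * useq B' J' k (k-1))
      = (if k = 0 then 0 else J' (k-1) * useq B' J' k (k-1)) := by
    by_cases hk0 : k = 0
    · rw [if_pos hk0, if_pos hk0]
    · rw [if_neg hk0, if_neg hk0, hJ (k-1) (by omega)]
  rw [h3]
  ring

lemma useq_succ_at_k1 : useq B J (k+1) (k+1) = J k * useq B J k k := by
  simp only [useq]
  rw [useq_supp B J k (k+1+1) (by omega), useq_supp B J k (k+1) (by omega),
    if_neg (by omega), Nat.add_sub_cancel]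
  ring

end offsite

section Bridge

variable {N : ℕ} (hN : 0 < N) (B J : ℕ → ℝ)

lemma triR_symm : (triR N B J)ᵀ = triR N B J := by
  ext i j
  simp only [transpose_apply, triR, of_apply]
  split_ifs with h1 h2 h3 h4 h5 h6 h7 h8 <;>
    first
      | rfl
      | omega
      | (exact congrArg B (by omega))
      | (exact congrArg J (by omega))

lemma tri_sum_collapse (m j : ℕ) (hj : j < N) (hm : m < N) :
    ∑ l : Fin N, triR N B J ⟨j, hj⟩ l * useq B J m ↑l = useq B J (m+1) j := by
  have congr1 : ∑ l : Fin N, triR N B J ⟨j, hj⟩ l * useq B J m ↑l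
      = ∑ t ∈ Finset.range N, (if j = t then B j else if j+1 = t then J j
        else if t+1 = j then J t else 0) * useq B J m t :=
    Fin.sum_univ_eq_sum_range (fun t => (if j = t then B j else if j+1 = t then J j
        else if t+1 = j then J t else 0) * useq B J m t) N
  rw [congr1]
  have hdec : ∀ t, (if j = t then B j else if j+1 = t then J j
        else if t+1 = j then J t else 0) * useq B J m t
      = (if t = j then B j * useq B J m j else 0)
        + (if t = j+1 then J j * useq B J m (j+1) else 0)
        + (if t = j-1 ∧ j ≠ 0 then J (j-1) * useq B J m (j-1) else 0) := by
    intro t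
    by_cases h1 : j = t
    · subst h1
      rw [if_pos rfl, if_pos rfl, if_neg (by omega), if_neg (by omega)]
      ring
    · rw [if_neg h1]
      by_cases h2 : j + 1 = t
      · rw [if_pos h2, if_neg (by omega), if_pos (by omega), if_neg (by omega)]
        rw [← h2]
        ring
      · rw [if_neg h2]
        by_cases h3 : t + 1 = j
        · rw [if_pos h3, if_neg (by omega), if_neg (by omega), if_pos (by omega)]
          have : j - 1 = t := by omega
          rw [this]
          ring
        · rw [if_neg h3, if_neg (by omega), if_neg (by omega), if_neg (by omega)]
          ring
  rw [Finset.sum_congr rfl (fun t _ => hdec t)]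
  rw [Finset.sum_add_distrib, Finset.sum_add_distrib]
  rw [Finset.sum_ite_eq' (Finset.range N) j, Finset.sum_ite_eq' (Finset.range N) (j+1)]
  have hterm3 : (∑ t ∈ Finset.range N, if t = j-1 ∧ j ≠ 0 then J (j-1) * useq B J m (j-1) else 0)
      = if j = 0 then 0 else J (j-1) * useq B J m (j-1) := by
    by_cases hj0 : j = 0
    · rw [if_pos hj0]
      apply Finset.sum_eq_zero
      intro t _
      rw [if_neg (by tauto)]
    · rw [if_neg hj0]
      have : ∀ t, (if t = j-1 ∧ j ≠ 0 then J (j-1) * useq B J m (j-1) else 0)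
          = (if t = j-1 then J (j-1) * useq B J m (j-1) else 0) := by
        intro t
        by_cases h : t = j - 1
        · rw [if_pos ⟨h, hj0⟩, if_pos h]
        · rw [if_neg (by tauto), if_neg h]
      rw [Finset.sum_congr rfl (fun t _ => this t), Finset.sum_ite_eq' (Finset.range N) (j-1)]
      rw [if_pos (by simp; omega)]
  rw [hterm3]
  rw [if_pos (by simp [hj])]
  have hterm2 : (if j+1 ∈ Finset.range N then J j * useq B J m (j+1) else 0)
      = J j * useq B J m (j+1) := by
    by_cases h : j + 1 ∈ Finset.range N
    · rw [if_pos h]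
    · rw [if_neg h]
      simp only [Finset.mem_range] at h
      rw [useq_supp B J m (j+1) (by omega)]
      ring
  rw [hterm2]
  simp only [useq]
  ring_nf

lemma bridge : ∀ m, m ≤ N → ∀ j : Fin N,
    ((triR N B J)^m).mulVec (Pi.single (⟨0, hN⟩ : Fin N) (1:ℝ)) j = useq B J m ↑j := by
  intro m
  induction m with
  | zero =>
    intro _ j
    rw [pow_zero, one_mulVec]
    simp only [useq]
    by_cases h : j = (⟨0, hN⟩ : Fin N)
    · subst h; rw [Pi.single_eq_same, if_pos rfl]
    · rw [Pi.single_eq_of_ne h, if_neg (by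
        intro hc
        exact h (Fin.ext (by simpa using hc)))]
  | succ m ih =>
    intro hm j
    rw [pow_succ', ← mulVec_mulVec]
    have hmv : ∀ v : Fin N → ℝ, (triR N B J).mulVec v j = ∑ l : Fin N, triR N B J j l * v l :=
      fun v => rfl
    rw [hmv, Finset.sum_congr rfl fun l _ => by rw [ih (by omega) l]]
    have hj : (j : ℕ) < N := j.isLt
    have := tri_sum_collapse B J m ↑j hj (by omega)
    simpa using this

lemma mom_sum (a b : ℕ) (ha : a ≤ N) (hb : b ≤ N) :
    ((triR N B J)^(a+b)) ⟨0, hN⟩ ⟨0, hN⟩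
      = ∑ t ∈ Finset.range N, useq B J a t * useq B J b t := by
  have hsym : ∀ m, ((triR N B J)^m)ᵀ = (triR N B J)^m := fun m => by
    rw [transpose_pow, triR_symm]
  have hcol : ∀ m, m ≤ N → ∀ l : Fin N, ((triR N B J)^m) l ⟨0, hN⟩ = useq B J m ↑l := by
    intro m hm l
    have := bridge hN B J m hm l
    rw [mulVec_single] at this
    simpa using this
  rw [pow_add, mul_apply]
  have : ∀ l : Fin N, ((triR N B J)^a) ⟨0,hN⟩ l * ((triR N B J)^b) l ⟨0,hN⟩
      = (fun t => useq B J a t * useq B J b t) ↑l := by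
    intro l
    have h1 : ((triR N B J)^a) ⟨0,hN⟩ l = ((triR N B J)^a) l ⟨0,hN⟩ := by
      conv_lhs => rw [← hsym a]
      rfl
    rw [h1, hcol a ha l, hcol b hb l]
  rw [Finset.sum_congr rfl fun l _ => this l]
  exact Fin.sum_univ_eq_sum_range (fun t => useq B J a t * useq B J b t) N

end Bridge

theorem tri_core (N : ℕ) (hN : 0 < N) (B J B' J' : ℕ → ℝ)
    (hJpos : ∀ i, i+1 < N → 0 < J i) (hJpos' : ∀ i, i+1 < N → 0 < J' i)
    (hmom : ∀ m, ((triR N B J)^m) ⟨0,hN⟩ ⟨0,hN⟩ = ((triR N B' J')^m) ⟨0,hN⟩ ⟨0,hN⟩) :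
    ∀ k, (k < N → B k = B' k) ∧ (k+1 < N → J k = J' k) := by
  have hsum : ∀ a b, a ≤ N → b ≤ N →
      ∑ t ∈ Finset.range N, useq B J a t * useq B J b t
        = ∑ t ∈ Finset.range N, useq B' J' a t * useq B' J' b t := by
    intro a b ha hb
    rw [← mom_sum hN B J a b ha hb, ← mom_sum hN B' J' a b ha hb, hmom]
  intro k
  induction k using Nat.strong_induction_on with
  | _ k IH =>
  by_cases hkN : k < N
  swap
  · exact ⟨fun h => absurd h hkN, fun h => absurd (by omega) hkN⟩
  have hB : ∀ i, i < k → B i = B' i := fun i hi => (IH i hi).1 (by omega)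
  have hJe : ∀ i, i < k → J i = J' i := fun i hi => (IH i hi).2 (by omega)
  have huk : useq B J k = useq B' J' k := useq_congr B J B' J' k hB hJe k le_rfl
  have hlne : useq B J k k ≠ 0 := by
    rw [useq_lead]
    exact ne_of_gt (Finset.prod_pos fun i hi => hJpos i (by
      simp only [Finset.mem_range] at hi; omega))
  have hBk : B k = B' k := by
    have h1 := hsum k (k+1) (by omega) (by omega)
    have h2 : ∑ t ∈ Finset.range N,
        (useq B J k t * useq B J (k+1) t - useq B' J' k t * useq B' J' (k+1) t)
        = useq B J k k * ((B k - B' k) * useq B J k k) := by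
      rw [Finset.sum_eq_single_of_mem k (Finset.mem_range.mpr hkN)]
      · have h3 := useq_succ_at_k B J B' J' k hB hJe
        rw [← huk]
        linear_combination useq B J k k * h3
      · intro t _ htk
        by_cases ht1 : t = k + 1
        · subst ht1
          rw [useq_supp B J k (k+1) (by omega), ← huk, useq_supp B J k (k+1) (by omega)]
          ring
        · rw [← huk, useq_succ_offsite B J B' J' k hB hJe htk ht1]
          ring
    rw [Finset.sum_sub_distrib, h1, sub_self] at h2
    have h4 : (B k - B' k) * (useq B J k k * useq B J k k) = 0 := by nlinarith [h2]
    rcases mul_eq_zero.mp h4 with h | h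
    · linarith
    · exact absurd h (mul_ne_zero hlne hlne)
  refine ⟨fun _ => hBk, fun hk1 => ?_⟩
  have hatk : useq B J (k+1) k = useq B' J' (k+1) k := by
    have h3 := useq_succ_at_k B J B' J' k hB hJe
    rw [hBk, sub_self, zero_mul] at h3
    linarith
  have h1 := hsum (k+1) (k+1) (by omega) (by omega)
  have h2 : ∑ t ∈ Finset.range N,
      (useq B J (k+1) t * useq B J (k+1) t - useq B' J' (k+1) t * useq B' J' (k+1) t)
      = (J k * useq B J k k) * (J k * useq B J k k)
        - (J' k * useq B J k k) * (J' k * useq B J k k) := by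
    rw [Finset.sum_eq_single_of_mem (k+1) (Finset.mem_range.mpr hk1)]
    · rw [useq_succ_at_k1 B J k, useq_succ_at_k1 B' J' k, ← huk]
    · intro t _ htk1
      by_cases htk : t = k
      · subst htk
        rw [hatk]; ring
      · rw [useq_succ_offsite B J B' J' k hB hJe htk htk1]
        ring
  rw [Finset.sum_sub_distrib, h1, sub_self] at h2
  have hc : 0 < useq B J k k * useq B J k k := mul_self_pos.mpr hlne
  have h5 : (J k * J k - J' k * J' k) * (useq B J k k * useq B J k k) = 0 := by
    linear_combination -h2
  have hsq : J k * J k = J' k * J' k := by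
    rcases mul_eq_zero.mp h5 with h | h
    · linarith
    · exact absurd h (ne_of_gt hc)
  have h6 : (J k - J' k) * (J k + J' k) = 0 := by linear_combination hsq
  rcases mul_eq_zero.mp h6 with h | h
  · linarith
  · have := hJpos k hk1
    have := hJpos' k hk1
    linarith



section Conj

variable {N : ℕ} (hN : 0 < N) (B J : ℕ → ℝ)

/-- sign flip sequence -/
noncomputable def eps (J : ℕ → ℝ) : ℕ → ℝ :=
  fun i => ∏ t ∈ Finset.range i, (if J t < 0 then (-1:ℝ) else 1)

lemma eps_sq (J : ℕ → ℝ) (i : ℕ) : eps J i * eps J i = 1 := by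
  rw [eps, ← Finset.prod_mul_distrib]
  apply Finset.prod_eq_one
  intro t _
  split_ifs <;> norm_num

lemma eps_succ (J : ℕ → ℝ) (i : ℕ) :
    eps J (i+1) = eps J i * (if J i < 0 then (-1:ℝ) else 1) := by
  rw [eps, eps, Finset.prod_range_succ]

lemma mom_abs : ∀ m, ((triR N B (fun i => |J i|))^m) ⟨0,hN⟩ ⟨0,hN⟩
    = ((triR N B J)^m) ⟨0,hN⟩ ⟨0,hN⟩ := by
  set D : Matrix (Fin N) (Fin N) ℝ := Matrix.diagonal (fun i : Fin N => eps J ↑i) with hD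
  have hD2 : D * D = 1 := by
    rw [hD, diagonal_mul_diagonal]
    rw [show (fun i : Fin N => eps J ↑i * eps J ↑i) = fun _ => 1 from
      funext fun i => eps_sq J ↑i]
    exact diagonal_one
  have hDH : D * triR N B J * D = triR N B (fun i => |J i|) := by
    ext i j
    rw [mul_apply]
    have : ∀ l : Fin N, (D * triR N B J) i l * D l j
        = (eps J ↑i * triR N B J i l) * D l j := by
      intro l
      rw [hD, diagonal_mul]
    rw [Finset.sum_congr rfl fun l _ => this l]
    rw [show (∑ l : Fin N, (eps J ↑i * triR N B J i l) * D l j)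
        = eps J ↑i * triR N B J i j * eps J ↑j from ?_]
    · simp only [triR, of_apply]
      split_ifs with h1 h2 h3
      · have : i = j := Fin.ext h1
        subst this
        rw [show eps J ↑i * B ↑i * eps J ↑i = (eps J ↑i * eps J ↑i) * B ↑i by ring,
          eps_sq]
        ring
      · -- ↑i + 1 = ↑j
        have hj : (j:ℕ) = ↑i + 1 := by omega
        rw [hj, eps_succ]
        rw [show eps J ↑i * J ↑i * (eps J ↑i * (if J ↑i < 0 then (-1:ℝ) else 1))
            = (eps J ↑i * eps J ↑i) * (J ↑i * (if J ↑i < 0 then (-1:ℝ) else 1)) by ring,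
          eps_sq]
        split_ifs with hs
        · rw [abs_of_neg hs]; ring
        · rw [abs_of_nonneg (by linarith)]; ring
      · -- ↑j + 1 = ↑i
        have hi : (i:ℕ) = ↑j + 1 := by omega
        rw [hi, eps_succ]
        rw [show eps J ↑j * (if J ↑j < 0 then (-1:ℝ) else 1) * J ↑j * eps J ↑j
            = (eps J ↑j * eps J ↑j) * (J ↑j * (if J ↑j < 0 then (-1:ℝ) else 1)) by ring,
          eps_sq]
        split_ifs with hs
        · rw [abs_of_neg hs]; ring
        · rw [abs_of_nonneg (by linarith)]; ring
      · ring
    · -- sum collapses: D diagonal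
      rw [Finset.sum_eq_single_of_mem j (Finset.mem_univ j)]
      · rw [hD, diagonal_apply_eq]
      · intro l _ hlj
        rw [hD, diagonal_apply_ne _ hlj]
        ring
  have hpow : ∀ m, (triR N B (fun i => |J i|))^m = D * (triR N B J)^m * D := by
    intro m
    induction m with
    | zero => rw [pow_zero, pow_zero, mul_one, hD2]
    | succ m ih =>
      rw [pow_succ, ih, ← hDH]
      rw [show D * (triR N B J)^m * D * (D * triR N B J * D)
          = D * (triR N B J)^m * (D * D) * triR N B J * D by noncomm_ring]
      rw [hD2]
      rw [show D * (triR N B J)^m * 1 * triR N B J * D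
          = D * ((triR N B J)^m * triR N B J) * D by noncomm_ring]
      rw [← pow_succ]
  intro m
  rw [hpow m, mul_apply]
  rw [Finset.sum_eq_single_of_mem (⟨0,hN⟩ : Fin N) (Finset.mem_univ _)]
  · rw [mul_apply]
    rw [Finset.sum_eq_single_of_mem (⟨0,hN⟩ : Fin N) (Finset.mem_univ _)]
    · rw [hD, diagonal_apply_eq]
      have h0 : eps J ↑(⟨0,hN⟩ : Fin N) = 1 := by
        simp [eps]
      rw [h0]
      ring
    · intro l _ hl
      rw [hD, diagonal_apply_ne' _ hl]
      ring
  · intro l _ hl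
    rw [hD, diagonal_apply_ne _ hl]
    ring

lemma tri_rev :
    triR N (fun i => B (N-1-i)) (fun i => J (N-2-i)) = (triR N B J).submatrix Fin.rev Fin.rev := by
  ext i j
  have hi := i.isLt
  have hj := j.isLt
  simp only [submatrix_apply, triR, of_apply, Fin.val_rev]
  split_ifs <;>
    first
      | rfl
      | omega
      | (exact congrArg B (by omega))
      | (exact congrArg J (by omega))

lemma submatrix_rev_pow (M : Matrix (Fin N) (Fin N) ℝ) :
    ∀ m, (M.submatrix Fin.rev Fin.rev)^m = (M^m).submatrix Fin.rev Fin.rev := by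
  intro m
  induction m with
  | zero =>
    rw [pow_zero, pow_zero]
    exact (submatrix_one_equiv (Fin.revPerm : Fin N ≃ Fin N)).symm
  | succ m ih =>
    rw [pow_succ, ih, pow_succ]
    exact submatrix_mul_equiv (M^m) M _ (Fin.revPerm : Fin N ≃ Fin N) _

lemma mom_rev : ∀ m, ((triR N (fun i => B (N-1-i)) (fun i => J (N-2-i)))^m) ⟨0,hN⟩ ⟨0,hN⟩
    = ((triR N B J)^m) ⟨N-1, nm1_lt hN⟩ ⟨N-1, nm1_lt hN⟩ := by
  intro m
  rw [tri_rev, submatrix_rev_pow, submatrix_apply]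
  congr 1 <;> exact Fin.ext (by simp [Fin.val_rev])



end Conj

/-- a tsum with all terms in a closed submodule lies in the submodule -/
lemma tsum_mem_of_closed {E : Type*} [AddCommGroup E] [Module ℂ E] [TopologicalSpace E]
    [IsTopologicalAddGroup E] [T2Space E] (S : Submodule ℂ E) (hS : IsClosed (S : Set E))
    {ι : Type*} (f : ι → E) (hf : ∀ i, f i ∈ S) : (∑' i, f i) ∈ S := by
  by_cases h : Summable f
  · exact hS.mem_of_tendsto h.hasSum
      (Filter.Eventually.of_forall fun s => S.sum_mem fun i _ => hf i)
  · rw [tsum_eq_zero_of_not_summable h]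
    exact S.zero_mem

section Cplx

variable {N : ℕ} (hN : 0 < N) (B J : ℕ → ℝ)

lemma triC_eq_map : triC N B J = (Complex.ofRealHom.mapMatrix (triR N B J)) := by
  ext i j
  simp only [triC, triR, RingHom.mapMatrix_apply, Matrix.map_apply, of_apply]
  split_ifs <;> simp

lemma triC_pow_entry (m : ℕ) (i j : Fin N) :
    ((triC N B J)^m) i j = (((triR N B J)^m) i j : ℂ) := by
  rw [triC_eq_map, ← map_pow, RingHom.mapMatrix_apply, Matrix.map_apply]
  rfl

lemma triC_herm : (triC N B J)ᴴ = triC N B J := by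
  ext i j
  simp only [conjTranspose_apply, triC, of_apply]
  split_ifs <;> (try (exfalso; omega)) <;>
    simp only [Complex.star_def, Complex.conj_ofReal, star_zero] <;>
    first
      | rfl
      | (exact congrArg (fun t => ((B t : ℝ) : ℂ)) (by omega))

section PST

open NormedSpace

variable (t₀ : ℝ)

/-- the generator -/
noncomputable def genX (N : ℕ) (B J : ℕ → ℝ) (t₀ : ℝ) : Matrix (Fin N) (Fin N) ℂ :=
  (-(Complex.I * t₀)) • triC N B J

lemma genX_skew : (genX N B J t₀)ᴴ = -genX N B J t₀ := by
  rw [genX, conjTranspose_smul, triC_herm]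
  rw [show star (-(Complex.I * (t₀:ℂ))) = Complex.I * t₀ by
    simp [Complex.star_def, Complex.conj_ofReal]]
  rw [← neg_smul]
  congr 1
  ring

lemma genX_unitary :
    (exp (genX N B J t₀))ᴴ * exp (genX N B J t₀) = 1 := by
  rw [← Matrix.exp_conjTranspose, genX_skew]
  rw [← Matrix.exp_add_of_commute (-genX N B J t₀) (genX N B J t₀)
    (Commute.neg_left (Commute.refl _))]
  rw [neg_add_cancel, exp_zero]

lemma genX_comm :
    exp (genX N B J t₀) * triC N B J = triC N B J * exp (genX N B J t₀) := by
  have hS : ∀ M ∈ Submodule.span ℂ {X : Matrix (Fin N) (Fin N) ℂ | True}, True := fun _ _ => trivial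
  set S : Submodule ℂ (Matrix (Fin N) (Fin N) ℂ) :=
    { carrier := {M | M * triC N B J = triC N B J * M}
      add_mem' := by
        intro a b ha hb
        simp only [Set.mem_setOf_eq] at *
        rw [add_mul, mul_add, ha, hb]
      zero_mem' := by simp
      smul_mem' := by
        intro c a ha
        simp only [Set.mem_setOf_eq] at *
        rw [smul_mul_assoc, mul_smul_comm, ha] } with hSdef
  have hmem : exp (genX N B J t₀) ∈ S := by
    rw [exp_eq_tsum (𝕂 := ℂ)]
    apply tsum_mem_of_closed S (Submodule.closed_of_finiteDimensional S)
    intro n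
    show ((n.factorial : ℂ)⁻¹ • genX N B J t₀ ^ n) * triC N B J
        = triC N B J * ((n.factorial : ℂ)⁻¹ • genX N B J t₀ ^ n)
    have hc : Commute (genX N B J t₀) (triC N B J) := by
      rw [genX]
      exact (Commute.refl (triC N B J)).smul_left _
    have := (hc.pow_left n).eq
    rw [smul_mul_assoc, mul_smul_comm, this]
  exact hmem

/-- if some coupling vanishes, the evolution is block diagonal and the far corner entry of
the propagator vanishes -/
lemma genX_block (k : ℕ) (hk : k + 1 < N) (hJk : J k = 0) :
    exp (genX N B J t₀) ⟨N-1, nm1_lt hN⟩ ⟨0, by omega⟩ = 0 := by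
  set S : Submodule ℂ (Matrix (Fin N) (Fin N) ℂ) :=
    { carrier := {M | ∀ i j : Fin N,
        (((i:ℕ) ≤ k ∧ k < (j:ℕ)) ∨ ((j:ℕ) ≤ k ∧ k < (i:ℕ))) → M i j = 0}
      add_mem' := by
        intro a b ha hb i j hij
        simp only [Matrix.add_apply, ha i j hij, hb i j hij, add_zero]
      zero_mem' := by intro i j hij; rfl
      smul_mem' := by
        intro c a ha i j hij
        simp only [Matrix.smul_apply, ha i j hij, smul_zero] } with hSdef
  have hXmem : genX N B J t₀ ∈ S := by
    intro i j hij
    rw [genX, Matrix.smul_apply]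
    have : triC N B J i j = 0 := by
      simp only [triC, of_apply]
      rcases hij with ⟨h1, h2⟩ | ⟨h1, h2⟩
      · rw [if_neg (by omega)]
        by_cases hij1 : (i:ℕ) + 1 = (j:ℕ)
        · rw [if_pos hij1]
          have : (i:ℕ) = k := by omega
          rw [this, hJk, Complex.ofReal_zero]
        · rw [if_neg hij1, if_neg (by omega)]
      · rw [if_neg (by omega), if_neg (by omega)]
        by_cases hij1 : (j:ℕ) + 1 = (i:ℕ)
        · rw [if_pos hij1]
          have : (j:ℕ) = k := by omega
          rw [this, hJk, Complex.ofReal_zero]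
        · rw [if_neg hij1]
    rw [this, smul_zero]
  have hpowmem : ∀ n, genX N B J t₀ ^ n ∈ S := by
    intro n
    induction n with
    | zero =>
      intro i j hij
      rw [pow_zero]
      exact Matrix.one_apply_ne (by intro h; subst h; omega)
    | succ n ih =>
      intro i j hij
      rw [pow_succ, mul_apply]
      apply Finset.sum_eq_zero
      intro l _
      by_cases hl : (l:ℕ) ≤ k
      · rcases hij with ⟨h1, h2⟩ | ⟨h1, h2⟩
        · rw [hXmem l j (Or.inl ⟨hl, h2⟩), mul_zero]
        · rw [ih i l (Or.inr ⟨hl, h2⟩), zero_mul]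
      · rcases hij with ⟨h1, h2⟩ | ⟨h1, h2⟩
        · rw [ih i l (Or.inl ⟨h1, by omega⟩), zero_mul]
        · rw [hXmem l j (Or.inr ⟨h1, by omega⟩), mul_zero]
  have hexp : exp (genX N B J t₀) ∈ S := by
    rw [exp_eq_tsum (𝕂 := ℂ)]
    apply tsum_mem_of_closed S (Submodule.closed_of_finiteDimensional S)
    intro n
    intro i j hij
    rw [Matrix.smul_apply, hpowmem n i j hij, smul_zero]
  exact hexp _ _ (Or.inr ⟨by simp, by simp; omega⟩)

lemma star_single_one (i : Fin N) :
    star (Pi.single i (1:ℂ) : Fin N → ℂ) = Pi.single i (1:ℂ) := by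
  funext j
  by_cases h : j = i
  · subst h; simp
  · simp [Pi.single_eq_of_ne h]

lemma phase_unit (φ : ℝ) : star (Complex.exp (Complex.I * φ)) * Complex.exp (Complex.I * φ) = 1 := by
  rw [Complex.star_def, ← Complex.exp_conj, ← Complex.exp_add]
  simp [Complex.conj_ofReal]

lemma corner_dot (M : Matrix (Fin N) (Fin N) ℂ) (i : Fin N) :
    star (Pi.single i (1:ℂ)) ⬝ᵥ M.mulVec (Pi.single i (1:ℂ)) = M i i := by
  rw [star_single_one, single_dotProduct, mulVec_single, one_mul]
  simp

lemma mom_corner (hN : 0 < N) (φ : ℝ)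
    (hPST : (exp (genX N B J t₀)).mulVec (Pi.single (⟨0,hN⟩ : Fin N) (1:ℂ))
      = Complex.exp (Complex.I * φ) • (Pi.single (⟨N-1, nm1_lt hN⟩ : Fin N) (1:ℂ) : Fin N → ℂ)) :
    ∀ m, ((triC N B J)^m) ⟨0,hN⟩ ⟨0,hN⟩ = ((triC N B J)^m) ⟨N-1, nm1_lt hN⟩ ⟨N-1, nm1_lt hN⟩ := by
  intro m
  set U := exp (genX N B J t₀) with hU
  set A := triC N B J with hA
  set e0 : Fin N → ℂ := Pi.single (⟨0,hN⟩ : Fin N) 1 with he0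
  set eN : Fin N → ℂ := Pi.single (⟨N-1, nm1_lt hN⟩ : Fin N) 1 with heN
  set ph := Complex.exp (Complex.I * φ) with hph
  have hC : Commute U A := genX_comm B J t₀
  have hUU : Uᴴ * U = 1 := genX_unitary B J t₀
  have hconj : Uᴴ * (A^m * U) = A^m := by
    rw [← (hC.pow_right m).eq, ← mul_assoc, hUU, one_mul]
  have key : star (U.mulVec e0) ⬝ᵥ (A^m).mulVec (U.mulVec e0)
      = (A^m) ⟨0,hN⟩ ⟨0,hN⟩ := by
    rw [star_mulVec, mulVec_mulVec, ← dotProduct_mulVec, mulVec_mulVec, hconj]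
    exact corner_dot (A^m) _
  rw [hPST] at key
  have expand : star (ph • eN) ⬝ᵥ (A^m).mulVec (ph • eN)
      = (star ph * ph) * (star eN ⬝ᵥ (A^m).mulVec eN) := by
    rw [star_smul, smul_dotProduct, mulVec_smul, dotProduct_smul]
    simp only [smul_eq_mul]
    ring
  rw [expand, phase_unit, one_mul, corner_dot] at key
  exact key.symm

end PST


end Cplx

end PSTaux

/-- If an `N × N` real symmetric tridiagonal matrix `H` (diagonal `B`, off-diagonal `J`)
admits a time `t₀ > 0` and a phase `φ` with `exp (-i t₀ H) e₁ = e^{iφ} e_N`, then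
`B n = B (N+1-n)` and `J n ^ 2 = J (N-n) ^ 2` for all `n` (stated here 0-indexed:
`B i = B (N-1-i)` for `i < N` and `J i ^ 2 = J (N-2-i) ^ 2` for `i + 1 < N`). -/
theorem mirror_symmetry_of_perfect_state_transfer
    (N : ℕ) (hN : 0 < N) (B J : ℕ → ℝ) (t₀ φ : ℝ) (ht₀ : 0 < t₀)
    (hPST : (NormedSpace.exp ((-(Complex.I * t₀)) • triC N B J)).mulVec
        (Pi.single (⟨0, hN⟩ : Fin N) (1 : ℂ)) =
      Complex.exp (Complex.I * φ) •
        (Pi.single (⟨N - 1, by omega⟩ : Fin N) (1 : ℂ) : Fin N → ℂ)) :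
    (∀ i, i < N → B i = B (N - 1 - i)) ∧
      (∀ i, i + 1 < N → J i ^ 2 = J (N - 2 - i) ^ 2) := by
  have hPST' : (NormedSpace.exp (PSTaux.genX N B J t₀)).mulVec
      (Pi.single (⟨0, hN⟩ : Fin N) (1 : ℂ))
      = Complex.exp (Complex.I * φ) •
        (Pi.single (⟨N - 1, by omega⟩ : Fin N) (1 : ℂ) : Fin N → ℂ) := hPST
  -- the propagator's far corner entry equals the phase
  have hcorner : NormedSpace.exp (PSTaux.genX N B J t₀) ⟨N-1, by omega⟩ ⟨0, hN⟩
      = Complex.exp (Complex.I * φ) := by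
    have h1 := congrFun hPST' ⟨N-1, by omega⟩
    rw [Matrix.mulVec_single] at h1
    simpa using h1
  -- all couplings are nonzero
  have hJne : ∀ i, i + 1 < N → J i ≠ 0 := by
    intro k hk hJk
    have h0 := PSTaux.genX_block hN B J t₀ k hk hJk
    rw [hcorner] at h0
    exact Complex.exp_ne_zero _ h0
  -- moments agree at both corners (complex, then real)
  have hmomC := PSTaux.mom_corner B J t₀ hN φ hPST'
  have hmomR : ∀ m, ((triR N B J)^m) ⟨0,hN⟩ ⟨0,hN⟩
      = ((triR N B J)^m) ⟨N-1, by omega⟩ ⟨N-1, by omega⟩ := by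
    intro m
    have := hmomC m
    rw [PSTaux.triC_pow_entry, PSTaux.triC_pow_entry] at this
    exact_mod_cast this
  have hrev := PSTaux.mom_rev hN B J
  have hmomF : ∀ m, ((triR N B (fun i => |J i|))^m) ⟨0,hN⟩ ⟨0,hN⟩
      = ((triR N (fun i => B (N-1-i)) (fun i => |J (N-2-i)|))^m) ⟨0,hN⟩ ⟨0,hN⟩ := by
    intro m
    rw [PSTaux.mom_abs hN B J m,
      PSTaux.mom_abs hN (fun i => B (N-1-i)) (fun i => J (N-2-i)) m, hmomR m, ← hrev m]
  have hJpos : ∀ i, i+1 < N → 0 < |J i| := fun i hi => abs_pos.mpr (hJne i hi)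
  have hJpos' : ∀ i, i+1 < N → 0 < |J (N-2-i)| :=
    fun i hi => abs_pos.mpr (hJne (N-2-i) (by omega))
  have hcore := PSTaux.tri_core N hN B (fun i => |J i|)
    (fun i => B (N-1-i)) (fun i => |J (N-2-i)|) hJpos hJpos' hmomF
  constructor
  · intro i hi
    exact (hcore i).1 hi
  · intro i hi
    have h2 : |J i| = |J (N-2-i)| := (hcore i).2 hi
    calc J i ^ 2 = |J i| ^ 2 := (sq_abs _).symm
      _ = |J (N-2-i)| ^ 2 := by rw [h2]
      _ = J (N-2-i) ^ 2 := sq_abs _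
end

section
/- Let H be a Hermitian matrix and ψ a unit vector with ⟨ψ, e^{-iHt_r} ψ⟩ = 0 for some t_r > 0. Then t_r ≥ π / (2·√(⟨ψ,H²ψ⟩ - ⟨ψ,Hψ⟩²)), i.e., the time to reach an orthogonal state is bounded below by π divided by twice the energy standard deviation (Mandelstam–Tamm bound). -/
open Matrix Finset

/-- Cubic lower bound for sine on the nonnegative reals. -/
lemma mt_sin_cube {t : ℝ} (ht : 0 ≤ t) : t - t ^ 3 / 6 ≤ Real.sin t := by
  have hmono : MonotoneOn (fun s : ℝ => Real.sin s - s + s ^ 3 / 6) (Set.Ici 0) := by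
    have hdiff : Differentiable ℝ (fun s : ℝ => Real.sin s - s + s ^ 3 / 6) :=
      (Real.differentiable_sin.sub differentiable_id).add
        ((differentiable_pow 3).div_const 6)
    apply monotoneOn_of_deriv_nonneg (convex_Ici 0) hdiff.continuous.continuousOn
      hdiff.differentiableOn
    intro s _
    have hd : HasDerivAt (fun s : ℝ => Real.sin s - s + s ^ 3 / 6)
        (Real.cos s - 1 + (3 : ℕ) * s ^ 2 / 6) s := by
      exact ((Real.hasDerivAt_sin s).sub (hasDerivAt_id s)).add
        ((hasDerivAt_pow 3 s).div_const 6)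
    rw [hd.deriv]
    have h1 := Real.one_sub_sq_div_two_le_cos (x := s)
    push_cast
    nlinarith
  have h0 := hmono (Set.self_mem_Ici) (Set.mem_Ici.mpr ht) ht
  simp only [Real.sin_zero] at h0
  nlinarith [h0]

/-- The key pointwise inequality behind the Mandelstam–Tamm bound:
`π²/4 ≤ x² + π cos x` for all real `x`. -/
lemma mt_key (x : ℝ) : Real.pi ^ 2 / 4 ≤ x ^ 2 + Real.pi * Real.cos x := by
  wlog hx : 0 ≤ x with Hw
  · have := Hw (-x) (by linarith)
    simpa [Real.cos_neg] using this
  rcases le_or_gt x (Real.pi / 2) with hx2 | hx2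
  · have ht : 0 ≤ Real.pi / 2 - x := by linarith
    have h1 : (Real.pi / 2 - x) - (Real.pi / 2 - x) ^ 3 / 6 ≤ Real.cos x := by
      rw [← Real.sin_pi_div_two_sub]
      exact mt_sin_cube ht
    have h315 := Real.pi_lt_d2
    have h3 := Real.pi_gt_three
    have hnn : 0 ≤ (Real.pi / 2 - x) ^ 2 * (6 - Real.pi * (Real.pi / 2 - x)) := by
      apply mul_nonneg (sq_nonneg _)
      nlinarith
    nlinarith [h1, hnn]
  · have h1 : Real.pi / 2 - x ≤ Real.cos x := by
      have h2 : Real.sin (x - Real.pi / 2) ≤ x - Real.pi / 2 :=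
        Real.sin_le (by linarith)
      have h3 : Real.sin (x - Real.pi / 2) = -Real.cos x := by
        rw [show x - Real.pi / 2 = -(Real.pi / 2 - x) by ring, Real.sin_neg,
          Real.sin_pi_div_two_sub]
      linarith [h2, h3.symm.le, h3.le]
    nlinarith [h1, sq_nonneg (x - Real.pi / 2), Real.pi_pos]

/-- Mandelstam–Tamm quantum speed limit: if `H` is Hermitian, `ψ` is a unit vector and
`⟨ψ, e^{-iHt_r} ψ⟩ = 0` for some `t_r > 0`, then
`t_r ≥ π / (2 √(⟨ψ,H²ψ⟩ - ⟨ψ,Hψ⟩²))`. -/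
theorem mandelstam_tamm_bound
    (N : ℕ) (H : Matrix (Fin N) (Fin N) ℂ) (hH : H.IsHermitian)
    (ψ : Fin N → ℂ) (hψ : ∑ i, ‖ψ i‖ ^ 2 = 1)
    (tr : ℝ) (htr : 0 < tr)
    (horth : ∑ i, (starRingEnd ℂ) (ψ i) *
        ((NormedSpace.exp ((-(Complex.I * tr)) • H)).mulVec ψ) i = 0) :
    tr ≥ Real.pi / (2 * Real.sqrt
        ((∑ i, (starRingEnd ℂ) (ψ i) * ((H * H).mulVec ψ) i).re -
          ((∑ i, (starRingEnd ℂ) (ψ i) * (H.mulVec ψ) i).re) ^ 2)) := by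
  classical
  set A : Matrix (Fin N) (Fin N) ℂ := (hH.eigenvectorUnitary : Matrix (Fin N) (Fin N) ℂ)
    with hAdef
  have hA1 : star A * A = 1 := Matrix.mem_unitaryGroup_iff'.mp hH.eigenvectorUnitary.2
  have hA2 : A * star A = 1 := Matrix.mem_unitaryGroup_iff.mp hH.eigenvectorUnitary.2
  set lam : Fin N → ℝ := hH.eigenvalues with hlamdef
  set d : Fin N → ℂ := fun k => (lam k : ℂ) with hddef
  have hspec : H = A * diagonal d * star A := by
    exact hH.spectral_theorem
  set c : Fin N → ℂ := (star A) *ᵥ ψ with hcdef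
  set p : Fin N → ℝ := fun k => Complex.normSq (c k) with hpdef
  have hpc : ∀ k, (starRingEnd ℂ) (c k) * c k = (p k : ℂ) := by
    intro k
    rw [mul_comm, Complex.mul_conj]
  -- main computation: quadratic form of a conjugated diagonal matrix
  have hmain : ∀ e : Fin N → ℂ,
      ∑ i, (starRingEnd ℂ) (ψ i) * ((A * diagonal e * star A).mulVec ψ) i
        = ∑ k, e k * (p k : ℂ) := by
    intro e
    have h1 : (A * diagonal e * star A).mulVec ψ = A *ᵥ (diagonal e *ᵥ c) := by
      rw [hcdef, mulVec_mulVec, mulVec_mulVec]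
    rw [h1]
    have h2 : ∑ i, (starRingEnd ℂ) (ψ i) * (A *ᵥ (diagonal e *ᵥ c)) i
        = star ψ ⬝ᵥ (A *ᵥ (diagonal e *ᵥ c)) := by
      simp [dotProduct]
    rw [h2, dotProduct_mulVec]
    have h3 : star c = star ψ ᵥ* A := by
      rw [hcdef, star_mulVec]
      congr 1
      rw [← Matrix.star_eq_conjTranspose, star_star]
    rw [← h3]
    simp only [dotProduct, mulVec_diagonal, Pi.star_apply, RCLike.star_def]
    refine Finset.sum_congr rfl fun k _ => ?_
    rw [← hpc k]; ring
  -- normalization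
  have hnorm : ∑ k, p k = 1 := by
    have h1 := hmain (fun _ => 1)
    have h2 : A * diagonal (fun _ => (1 : ℂ)) * star A = 1 := by
      rw [diagonal_one, mul_one, hA2]
    rw [h2] at h1
    simp only [one_mul, one_mulVec] at h1
    have h3 : ∑ i, (starRingEnd ℂ) (ψ i) * ψ i = 1 := by
      have : ∀ i, (starRingEnd ℂ) (ψ i) * ψ i = ((‖ψ i‖ ^ 2 : ℝ) : ℂ) := by
        intro i
        rw [mul_comm, Complex.mul_conj, Complex.sq_norm]
      rw [Finset.sum_congr rfl fun i _ => this i]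
      push_cast
      exact_mod_cast congrArg (fun x : ℝ => (x : ℂ)) hψ
    rw [h3] at h1
    have h4 : ((∑ k, p k : ℝ) : ℂ) = 1 := by
      push_cast
      exact h1.symm
    exact_mod_cast h4
  set μ : ℝ := ∑ k, p k * lam k with hμdef
  set S2 : ℝ := ∑ k, p k * lam k ^ 2 with hS2def
  -- first moment
  have hH1 : (∑ i, (starRingEnd ℂ) (ψ i) * (H.mulVec ψ) i).re = μ := by
    rw [hspec, hmain d, Complex.re_sum]
    rw [hμdef]
    refine Finset.sum_congr rfl fun k _ => ?_
    simp [hddef, Complex.mul_re, mul_comm]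
  -- second moment
  have hHH : H * H = A * diagonal (fun k => d k * d k) * star A := by
    rw [hspec]
    have h1 : A * diagonal d * star A * (A * diagonal d * star A)
        = A * (diagonal d * ((star A * A) * (diagonal d * star A))) := by
      simp only [Matrix.mul_assoc]
    rw [h1, hA1, one_mul, ← Matrix.mul_assoc (diagonal d), diagonal_mul_diagonal,
      ← Matrix.mul_assoc]
  have hH2 : (∑ i, (starRingEnd ℂ) (ψ i) * ((H * H).mulVec ψ) i).re = S2 := by
    rw [hHH, hmain _, Complex.re_sum, hS2def]
    refine Finset.sum_congr rfl fun k _ => ?_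
    have : d k * d k * (p k : ℂ) = ((lam k ^ 2 * p k : ℝ) : ℂ) := by
      rw [hddef]; push_cast; ring
    rw [this, Complex.ofReal_re]; ring
  -- exponential in the eigenbasis
  have hU : IsUnit A := ⟨⟨A, star A, hA2, hA1⟩, rfl⟩
  have hAinv : A⁻¹ = star A := Matrix.inv_eq_left_inv hA1
  have hexp : NormedSpace.exp ((-(Complex.I * tr)) • H)
      = A * diagonal (fun k => Complex.exp ((-(Complex.I * tr)) * d k)) * star A := by
    rw [hspec]
    have h4 : (-(Complex.I * tr)) • (A * diagonal d * star A)
        = A * diagonal (fun k => (-(Complex.I * tr)) * d k) * A⁻¹ := by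
      rw [hAinv]
      rw [show diagonal (fun k => (-(Complex.I * tr)) * d k)
          = (-(Complex.I * tr)) • diagonal d by
        rw [← diagonal_smul]; congr 1]
      simp [Matrix.mul_smul, Matrix.smul_mul]
    rw [h4, Matrix.exp_conj A _ hU, Matrix.exp_diagonal, hAinv]
    congr 2
    funext k
    rw [Pi.exp_def, Complex.exp_eq_exp_ℂ]
  -- orthogonality in the eigenbasis
  have horth2 : ∑ k, Complex.exp ((-(Complex.I * tr)) * d k) * (p k : ℂ) = 0 := by
    rw [← hmain (fun k => Complex.exp ((-(Complex.I * tr)) * d k)), ← hexp]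
    exact horth
  -- multiply by the phase e^{i t μ} and take real parts
  have horth3 : ∑ k, p k * Real.cos (tr * (μ - lam k)) = 0 := by
    have h5 : ∑ k, (p k : ℂ) * Complex.exp (((tr * (μ - lam k) : ℝ) : ℂ) * Complex.I)
        = 0 := by
      have h6 := congrArg (fun z => Complex.exp (Complex.I * (tr * μ)) * z) horth2
      simp only [mul_zero, Finset.mul_sum] at h6
      rw [← h6]
      refine Finset.sum_congr rfl fun k _ => ?_
      rw [← mul_assoc, ← Complex.exp_add]
      rw [mul_comm ((p k : ℂ))]
      congr 1
      rw [hddef]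
      push_cast
      ring
    have h7 := congrArg Complex.re h5
    rw [Complex.re_sum] at h7
    simp only [Complex.zero_re] at h7
    rw [← h7]
    refine Finset.sum_congr rfl fun k _ => ?_
    rw [Complex.re_ofReal_mul, Complex.exp_ofReal_mul_I_re]
  -- the variance inequality
  have hineq : Real.pi ^ 2 / 4 * (∑ k, p k)
      ≤ ∑ k, (p k * (tr * (lam k - μ)) ^ 2
          + Real.pi * (p k * Real.cos (tr * (μ - lam k)))) := by
    rw [Finset.mul_sum]
    refine Finset.sum_le_sum fun k _ => ?_
    have hk := mt_key (tr * (lam k - μ))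
    have hpk : 0 ≤ p k := Complex.normSq_nonneg _
    have hcc : Real.cos (tr * (lam k - μ)) = Real.cos (tr * (μ - lam k)) := by
      rw [show tr * (lam k - μ) = -(tr * (μ - lam k)) by ring, Real.cos_neg]
    rw [hcc] at hk
    nlinarith [mul_le_mul_of_nonneg_left hk hpk]
  have hsplit : ∑ k, (p k * (tr * (lam k - μ)) ^ 2
      + Real.pi * (p k * Real.cos (tr * (μ - lam k))))
      = tr ^ 2 * (S2 - μ ^ 2) := by
    rw [Finset.sum_add_distrib, ← Finset.mul_sum, horth3, mul_zero, add_zero]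
    have expand : ∀ k, p k * (tr * (lam k - μ)) ^ 2
        = tr ^ 2 * (p k * lam k ^ 2) - 2 * tr ^ 2 * μ * (p k * lam k)
          + tr ^ 2 * μ ^ 2 * p k := fun k => by ring
    rw [Finset.sum_congr rfl fun k _ => expand k]
    rw [Finset.sum_add_distrib, Finset.sum_sub_distrib, ← Finset.mul_sum,
      ← Finset.mul_sum, ← Finset.mul_sum, ← hS2def, ← hμdef, hnorm]
    ring
  have hfinal : Real.pi ^ 2 / 4 ≤ tr ^ 2 * (S2 - μ ^ 2) := by
    rw [hnorm, mul_one] at hineq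
    rw [hsplit] at hineq
    exact hineq
  -- conclude
  rw [hH1, hH2]
  set V : ℝ := S2 - μ ^ 2 with hVdef
  have hVpos : 0 < V := by
    nlinarith [Real.pi_gt_three, sq_nonneg tr, mul_pos htr htr]
  have hsq : Real.pi / (2 * tr) ≤ Real.sqrt V := by
    rw [show Real.pi / (2 * tr) = Real.sqrt ((Real.pi / (2 * tr)) ^ 2) from
      (Real.sqrt_sq (by positivity)).symm]
    apply Real.sqrt_le_sqrt
    rw [div_pow, div_le_iff₀ (by positivity)]
    nlinarith [hfinal]
  have hsV : 0 < Real.sqrt V := Real.sqrt_pos.mpr hVpos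
  rw [ge_iff_le, div_le_iff₀ (by positivity)]
  have h8 := mul_le_mul_of_nonneg_left hsq (le_of_lt htr)
  have h9 : tr * (Real.pi / (2 * tr)) = Real.pi / 2 := by
    field_simp
  nlinarith [h8]
end

section
/- Fix an integer M ≥ 2 and real numbers λ_1 < … < λ_N whose pairwise differences are integer multiples of π/t_0, and positive weights w_n summing to 1 with γ(t) = Σ_n w_n e^{-iλ_n t}. Partition indices into classes k ∈ {0,…,M-1} by (t_0/π)(λ_n - λ_1) mod M = k, and set R_k = Σ_{n in class k} w_n (signed appropriately). Then γ(2 m t_0/M) = 0 for all m = 1,…,M-1 if and only if R_0 = R_1 = … = R_{M-1}. -/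
open Finset

private lemma exp_ne_one' (M : ℕ) (hM : 0 < M) (d : ℤ) (hd : ¬ (M:ℤ) ∣ d) :
    Complex.exp (2 * Real.pi * Complex.I * d / M) ≠ 1 := by
  intro h
  rw [Complex.exp_eq_one_iff] at h
  obtain ⟨n, hn⟩ := h
  apply hd
  refine ⟨n, ?_⟩
  have hM0 : (M:ℂ) ≠ 0 := Nat.cast_ne_zero.mpr hM.ne'
  have hpi : (Real.pi:ℂ) ≠ 0 := by exact_mod_cast Real.pi_ne_zero
  have h1 : (2 * Real.pi * Complex.I) * (d:ℂ) = (2 * Real.pi * Complex.I) * (n * M) := by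
    field_simp at hn
    linear_combination (2 * Real.pi * Complex.I) * hn
  have h2 : (d:ℂ) = n * M := by
    have hne : (2 * Real.pi * Complex.I : ℂ) ≠ 0 := by
      simp [hpi, Complex.I_ne_zero]
    exact mul_left_cancel₀ hne h1
  rw [mul_comm]
  exact_mod_cast h2

private lemma orth' (M : ℕ) (hM : 0 < M) (d : ℤ) (hd : ¬ (M:ℤ) ∣ d) :
    ∑ m ∈ range M, Complex.exp (2 * Real.pi * Complex.I * d / M) ^ m = 0 := by
  have hζ := exp_ne_one' M hM d hd
  rw [geom_sum_eq hζ]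
  have hM0 : (M:ℂ) ≠ 0 := Nat.cast_ne_zero.mpr hM.ne'
  have hpow : Complex.exp (2 * Real.pi * Complex.I * d / M) ^ M = 1 := by
    rw [← Complex.exp_nat_mul]
    have he : (M:ℂ) * (2 * Real.pi * Complex.I * d / M) = (d:ℂ) * (2 * Real.pi * Complex.I) := by
      field_simp
    rw [he, Complex.exp_int_mul_two_pi_mul_I]
  simp [hpow]

private lemma dft_aux (M : ℕ) (hM : 0 < M) (j : ℕ) (hj : j < M) (k : ℕ) (hk : k < M) :
    ∑ m ∈ range M, Complex.exp (2 * Real.pi * Complex.I * ((j:ℤ) - (k:ℤ)) / M) ^ m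
      = if k = j then (M:ℂ) else 0 := by
  by_cases h : k = j
  · subst h; simp
  · rw [if_neg h]
    have hnd : ¬ ((M:ℤ) ∣ ((j:ℤ) - (k:ℤ))) := by
      intro hdvd
      have h1 : ((j:ℤ) - (k:ℤ)).natAbs < (M:ℤ).natAbs := by omega
      have := Int.eq_zero_of_dvd_of_natAbs_lt_natAbs hdvd h1
      omega
    have horth := orth' M hM ((j:ℤ) - (k:ℤ)) hnd
    push_cast at horth ⊢
    exact horth

private lemma dft (M : ℕ) (hM : 0 < M) (R : ℕ → ℂ)
    (h : ∀ m : ℕ, 1 ≤ m → m < M →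
      ∑ k ∈ range M, R k * Complex.exp (2 * Real.pi * Complex.I * (-(m:ℤ)) / M) ^ k = 0)
    (j : ℕ) (hj : j < M) : (M:ℂ) * R j = ∑ k ∈ range M, R k := by
  have hT2 : ∑ m ∈ range M,
      (∑ k ∈ range M, R k * Complex.exp (2 * Real.pi * Complex.I * (-(m:ℤ)) / M) ^ k)
        * Complex.exp (2 * Real.pi * Complex.I * (j:ℤ) / M) ^ m
      = (M:ℂ) * R j := by
    simp only [Finset.sum_mul]
    rw [Finset.sum_comm]
    have hcong : ∀ k ∈ range M,
        ∑ m ∈ range M, R k * Complex.exp (2 * Real.pi * Complex.I * (-(m:ℤ)) / M) ^ k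
          * Complex.exp (2 * Real.pi * Complex.I * (j:ℤ) / M) ^ m
        = R k * (if k = j then (M:ℂ) else 0) := by
      intro k hk
      have hterm : ∀ m : ℕ,
          Complex.exp (2 * Real.pi * Complex.I * (-(m:ℤ)) / M) ^ k
            * Complex.exp (2 * Real.pi * Complex.I * (j:ℤ) / M) ^ m
          = Complex.exp (2 * Real.pi * Complex.I * ((j:ℤ) - (k:ℤ)) / M) ^ m := by
        intro m
        rw [← Complex.exp_nat_mul, ← Complex.exp_nat_mul, ← Complex.exp_add,
          ← Complex.exp_nat_mul]
        congr 1
        push_cast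
        ring
      calc ∑ m ∈ range M, R k * Complex.exp (2 * Real.pi * Complex.I * (-(m:ℤ)) / M) ^ k
            * Complex.exp (2 * Real.pi * Complex.I * (j:ℤ) / M) ^ m
          = ∑ m ∈ range M, R k * Complex.exp (2 * Real.pi * Complex.I * ((j:ℤ) - (k:ℤ)) / M) ^ m := by
            refine Finset.sum_congr rfl fun m _ => ?_
            rw [mul_assoc, hterm m]
        _ = R k * (if k = j then (M:ℂ) else 0) := by
            rw [← Finset.mul_sum, dft_aux M hM j hj k (mem_range.mp hk)]
    rw [Finset.sum_congr rfl hcong]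
    simp [Finset.sum_ite_eq' (range M), mem_range.mpr hj, mul_comm]
  have hT1 : ∑ m ∈ range M,
      (∑ k ∈ range M, R k * Complex.exp (2 * Real.pi * Complex.I * (-(m:ℤ)) / M) ^ k)
        * Complex.exp (2 * Real.pi * Complex.I * (j:ℤ) / M) ^ m
      = ∑ k ∈ range M, R k := by
    rw [Finset.sum_eq_single_of_mem 0 (mem_range.mpr hM)]
    · simp
    · intro m hm hm0
      rw [h m (by omega) (mem_range.mp hm), zero_mul]
  exact hT2.symm.trans hT1


/-- Rate condition for transfer at rate `M/(2t₀)`: with eigenvalues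
`λₙ = λ₁ + zₙ·(π/t₀)` (integer `zₙ`, increasingly ordered) and positive weights `wₙ`
summing to `1`, the return amplitude `γ(t) = Σₙ wₙ e^{-iλₙt}` vanishes at
`t = 2mt₀/M` for all `m = 1,…,M-1` if and only if the class sums
`R_k = Σ_{n : zₙ ≡ k (mod M)} wₙ` are all equal. -/
theorem rate_condition_iff_class_sums_equal
    (N M : ℕ) (hM : 2 ≤ M) (t₀ : ℝ) (ht₀ : 0 < t₀)
    (hN : 0 < N)
    (lam : Fin N → ℝ) (hmono : StrictMono lam)
    (z : Fin N → ℤ)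
    (hz : ∀ n, lam n = lam ⟨0, hN⟩ + (z n : ℝ) * (Real.pi / t₀))
    (w : Fin N → ℝ) (hw : ∀ n, 0 < w n) (hsum : ∑ n, w n = 1) :
    ((∀ m : ℕ, 1 ≤ m → m < M →
        (∑ n, (w n : ℂ) *
          Complex.exp (-(Complex.I) * (lam n : ℝ) * ((2 * (m : ℝ) * t₀ / M : ℝ)))) = 0)
      ↔ (∀ k, k < M →
          (∑ n ∈ Finset.univ.filter (fun n => z n % (M : ℤ) = (k : ℤ)), w n) =
            ∑ n ∈ Finset.univ.filter (fun n => z n % (M : ℤ) = 0), w n)) := by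
  have hMpos : 0 < M := by omega
  have hM0C : (M:ℂ) ≠ 0 := Nat.cast_ne_zero.mpr hMpos.ne'
  have ht0C : (t₀:ℂ) ≠ 0 := by exact_mod_cast ht₀.ne'
  set R : ℕ → ℂ := fun k =>
    ((∑ n ∈ Finset.univ.filter (fun n => z n % (M : ℤ) = (k : ℤ)), w n : ℝ) : ℂ) with hR
  have key : ∀ m : ℕ,
      (∑ n, (w n : ℂ) *
          Complex.exp (-(Complex.I) * (lam n : ℝ) * ((2 * (m : ℝ) * t₀ / M : ℝ))))
      = Complex.exp (-(Complex.I) * (lam ⟨0, hN⟩ : ℝ) * ((2 * (m : ℝ) * t₀ / M : ℝ)))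
        * ∑ k ∈ range M, R k * Complex.exp (2 * Real.pi * Complex.I * (-(m:ℤ)) / M) ^ k := by
    intro m
    rw [Finset.mul_sum]
    rw [← Finset.sum_fiberwise_of_maps_to (g := fun n => (z n % (M:ℤ)).toNat)
      (t := range M) (fun n _ => by
        rw [mem_range]
        show (z n % (M:ℤ)).toNat < M
        have h1 : 0 ≤ z n % (M:ℤ) := Int.emod_nonneg _ (by exact_mod_cast hMpos.ne')
        have h2 : z n % (M:ℤ) < M := Int.emod_lt_of_pos _ (by exact_mod_cast hMpos)
        omega)]
    refine Finset.sum_congr rfl fun k hk => ?_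
    have hfilter : Finset.univ.filter (fun n => (z n % (M:ℤ)).toNat = k)
        = Finset.univ.filter (fun n => z n % (M:ℤ) = (k:ℤ)) := by
      ext n
      simp only [mem_filter, mem_univ, true_and]
      have h1 : 0 ≤ z n % (M:ℤ) := Int.emod_nonneg _ (by exact_mod_cast hMpos.ne')
      omega
    rw [hfilter]
    have hterm : ∀ n ∈ Finset.univ.filter (fun n => z n % (M:ℤ) = (k:ℤ)),
        (w n : ℂ) * Complex.exp (-(Complex.I) * (lam n : ℝ) * ((2 * (m : ℝ) * t₀ / M : ℝ)))
        = (w n : ℂ) * (Complex.exp (-(Complex.I) * (lam ⟨0, hN⟩ : ℝ) * ((2 * (m : ℝ) * t₀ / M : ℝ)))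
            * Complex.exp (2 * Real.pi * Complex.I * (-(m:ℤ)) / M) ^ k) := by
      intro n hn
      rw [mem_filter] at hn
      have hzn : (z n : ℂ) = (M:ℂ) * ((z n / (M:ℤ) : ℤ) : ℂ) + (k : ℂ) := by
        have h1 : z n = (M:ℤ) * (z n / (M:ℤ)) + (k:ℤ) := by
          conv_lhs => rw [← Int.mul_ediv_add_emod (z n) (M:ℤ)]
          rw [hn.2]
        exact_mod_cast congrArg (fun x : ℤ => (x : ℂ)) h1
      have hlam : ((lam n : ℝ) : ℂ)
          = ((lam ⟨0, hN⟩ : ℝ) : ℂ) + (z n : ℂ) * ((Real.pi : ℂ) / (t₀ : ℂ)) := by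
        rw [hz n]; push_cast; ring
      have hsplit : -(Complex.I) * ((lam n : ℝ) : ℂ) * ((2 * (m : ℝ) * t₀ / M : ℝ) : ℂ)
          = -(Complex.I) * ((lam ⟨0, hN⟩ : ℝ) : ℂ) * ((2 * (m : ℝ) * t₀ / M : ℝ) : ℂ)
            + ((z n / (M:ℤ) : ℤ) : ℂ) * ((-(m:ℤ) : ℤ) * (2 * (Real.pi:ℂ) * Complex.I))
            + (k : ℂ) * (2 * Real.pi * Complex.I * (-(m:ℤ)) / M) := by
        rw [hlam, hzn]
        push_cast
        field_simp
        ring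
      rw [hsplit, Complex.exp_add, Complex.exp_add, Complex.exp_int_mul,
        Complex.exp_int_mul_two_pi_mul_I, one_zpow, mul_one, Complex.exp_nat_mul]
    rw [Finset.sum_congr rfl hterm, hR]
    push_cast
    rw [← Finset.sum_mul]
    ring
  constructor
  · intro h k hk
    have h' : ∀ m : ℕ, 1 ≤ m → m < M →
        ∑ j ∈ range M, R j * Complex.exp (2 * Real.pi * Complex.I * (-(m:ℤ)) / M) ^ j = 0 := by
      intro m h1 h2
      have := h m h1 h2
      rw [key m] at this
      exact (mul_eq_zero.mp this).resolve_left (Complex.exp_ne_zero _)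
    have heq : R k = R 0 := by
      have e1 := dft M hMpos R h' k hk
      have e2 := dft M hMpos R h' 0 hMpos
      exact mul_left_cancel₀ hM0C (e1.trans e2.symm)
    rw [hR] at heq
    simp only [Nat.cast_zero] at heq
    exact_mod_cast heq
  · intro h m h1 h2
    rw [key m]
    apply mul_eq_zero_of_right
    have hndvd : ¬ ((M:ℤ) ∣ (-(m:ℤ))) := by
      intro hdvd
      have hlt : (-(m:ℤ)).natAbs < (M:ℤ).natAbs := by omega
      have := Int.eq_zero_of_dvd_of_natAbs_lt_natAbs hdvd hlt
      omega
    have hRk : ∀ j ∈ range M,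
        R j * Complex.exp (2 * Real.pi * Complex.I * (-(m:ℤ)) / M) ^ j
        = R 0 * Complex.exp (2 * Real.pi * Complex.I * (-(m:ℤ)) / M) ^ j := by
      intro j hj
      have := h j (mem_range.mp hj)
      rw [hR]
      simp only [Nat.cast_zero]
      rw [this]
    have horth := orth' M hMpos (-(m:ℤ)) hndvd
    push_cast at horth
    rw [Finset.sum_congr rfl hRk, ← Finset.mul_sum]
    push_cast
    rw [horth, mul_zero]
end

section
/- Let H be an N×N Hermitian matrix achieving perfect state transfer exp(-i t_0 H) e_1 = e^{iφ} e_N, and suppose H commutes with the mirror permutation S. Then exp(-i t_0 H) = e^{iφ} S, and consequently exp(-2 i t_0 H) = e^{2iφ} I; in particular the state revives at the input spin at time 2t_0, and perfect transfer from site n to site N+1-n occurs for every n at time t_0. -/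
open Matrix

/-- The mirror (order-reversing) permutation matrix `S eₙ = e_{N+1-n}`. -/
def mirrorC (N : ℕ) : Matrix (Fin N) (Fin N) ℂ :=
  Matrix.of fun i j => if j = i.rev then 1 else 0

lemma mirrorC_mul_self (N : ℕ) : mirrorC N * mirrorC N = 1 := by
  ext i j
  simp only [mirrorC, Matrix.mul_apply, Matrix.of_apply, ite_mul, one_mul, zero_mul,
    Finset.sum_ite_eq', Finset.mem_univ, if_true, Fin.rev_rev, Matrix.one_apply]
  by_cases h : j = i
  · simp [h]
  · rw [if_neg h, if_neg (fun hij : i = j => h hij.symm)]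

lemma triC_apply_col (N : ℕ) (B J : ℕ → ℝ) (x m : Fin N) :
    triC N B J x m = (if x = m then (B (m : ℕ) : ℂ) else 0) +
      (if (x : ℕ) = (m : ℕ) + 1 then (J (m : ℕ) : ℂ) else 0) +
      (if (x : ℕ) + 1 = (m : ℕ) then (J (x : ℕ) : ℂ) else 0) := by
  simp only [triC, Matrix.of_apply, Fin.ext_iff]
  split_ifs <;> first | omega | (simp only [*, add_zero, zero_add]; done) | ring

/-- If a (Hermitian) real symmetric tridiagonal matrix `H` with nonzero couplings
commutes with the mirror permutation `S` and achieves perfect state transfer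
`exp(-i t₀ H) e₁ = e^{iφ} e_N`, then `exp(-i t₀ H) = e^{iφ} S` as operators; in
particular `exp(-2i t₀ H) = e^{2iφ} 1`, so the state revives at the input at time `2t₀`
and every site `n` is transferred to site `N+1-n` at time `t₀`. -/
theorem perfect_state_transfer_implies_mirror
    (N : ℕ) (hN : 0 < N) (B J : ℕ → ℝ) (t₀ φ : ℝ) (ht₀ : 0 < t₀)
    (hJ : ∀ i, i + 1 < N → J i ≠ 0)
    (hcomm : mirrorC N * triC N B J = triC N B J * mirrorC N)
    (hPST : (NormedSpace.exp ((-(Complex.I * t₀)) • triC N B J)).mulVec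
        (Pi.single (⟨0, hN⟩ : Fin N) (1 : ℂ)) =
      Complex.exp (Complex.I * φ) •
        (Pi.single ((⟨0, hN⟩ : Fin N).rev) (1 : ℂ) : Fin N → ℂ)) :
    NormedSpace.exp ((-(Complex.I * t₀)) • triC N B J) =
        Complex.exp (Complex.I * φ) • mirrorC N ∧
      NormedSpace.exp ((-(Complex.I * (2 * t₀))) • triC N B J) =
        Complex.exp (2 * Complex.I * φ) • (1 : Matrix (Fin N) (Fin N) ℂ) := by
  set H := triC N B J with hHdef
  set S := mirrorC N with hSdef
  set U := NormedSpace.exp ((-(Complex.I * t₀)) • H) with hUdef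
  set c := Complex.exp (Complex.I * φ) with hcdef
  have hUH : H * U = U * H := (((Commute.refl H).smul_right (-(Complex.I * t₀))).exp_right).eq
  have hSS : S * S = 1 := mirrorC_mul_self N
  set A := S * U with hAdef
  have hAH : A * H = H * A := by
    rw [hAdef, mul_assoc, ← hUH, ← mul_assoc, hcomm, mul_assoc]
  -- entries of the first column of U from the PST hypothesis
  have hUcol : ∀ x : Fin N, U x ⟨0, hN⟩ =
      c * (if x = (⟨0, hN⟩ : Fin N).rev then 1 else 0) := by
    intro x
    have := congrFun hPST x
    simpa [Matrix.mulVec_single, Pi.single_apply] using this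
  -- first column of A
  have base : ∀ i : Fin N, A i ⟨0, hN⟩ = if i = ⟨0, hN⟩ then c else 0 := by
    intro i
    have : A i ⟨0, hN⟩ = ∑ x, S i x * U x ⟨0, hN⟩ := Matrix.mul_apply
    rw [this]
    simp only [hSdef, mirrorC, Matrix.of_apply, ite_mul, one_mul, zero_mul,
      Finset.sum_ite_eq', Finset.mem_univ, if_true]
    rw [hUcol]
    have : (i.rev = (⟨0, hN⟩ : Fin N).rev) ↔ i = ⟨0, hN⟩ := Fin.rev_inj
    by_cases h : i = ⟨0, hN⟩ <;> simp [h, this]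
  -- all columns of A by strong induction
  have key : ∀ m : ℕ, ∀ hm : m < N, ∀ i : Fin N,
      A i ⟨m, hm⟩ = if i = ⟨m, hm⟩ then c else 0 := by
    intro m
    induction m using Nat.strong_induction_on with
    | _ m ih =>
      cases m with
      | zero => intro hm i; exact base i
      | succ k =>
        intro hm i
        have hk : k < N := Nat.lt_of_succ_lt hm
        have hcol : ∀ x : Fin N, A x ⟨k, hk⟩ = if x = ⟨k, hk⟩ then c else 0 :=
          ih k (Nat.lt_succ_self k) hk
        have hEq : ∑ x, A i x * H x ⟨k, hk⟩ = ∑ x, H i x * A x ⟨k, hk⟩ := by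
          have h := congrFun (congrFun hAH i) (⟨k, hk⟩ : Fin N)
          simpa [Matrix.mul_apply] using h
        have hR : ∑ x, H i x * A x ⟨k, hk⟩ = H i ⟨k, hk⟩ * c := by
          simp [hcol, mul_ite, mul_zero, Finset.sum_ite_eq']
        -- decompose the left sum
        have hL : ∑ x, A i x * H x ⟨k, hk⟩ =
            (if i = ⟨k, hk⟩ then c else 0) * (B k : ℂ) +
            A i ⟨k + 1, hm⟩ * (J k : ℂ) +
            (if (i : ℕ) + 1 = k then c * (J (i : ℕ) : ℂ) else 0) := by
          have expand : ∀ x : Fin N, A i x * H x ⟨k, hk⟩ =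
              A i x * (if x = ⟨k, hk⟩ then (B k : ℂ) else 0) +
              A i x * (if (x : ℕ) = k + 1 then (J k : ℂ) else 0) +
              A i x * (if (x : ℕ) + 1 = k then (J (x : ℕ) : ℂ) else 0) := by
            intro x
            rw [hHdef, triC_apply_col]
            ring
          rw [Finset.sum_congr rfl fun x _ => expand x]
          rw [Finset.sum_add_distrib, Finset.sum_add_distrib]
          congr 1
          · congr 1
            · -- diagonal term
              rw [Finset.sum_congr rfl (fun x _ => by rw [mul_ite, mul_zero])]
              rw [Finset.sum_ite_eq' Finset.univ (⟨k, hk⟩ : Fin N) (fun x => A i x * (B k : ℂ))]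
              simp [hcol]
            · -- superdiagonal (unknown column k+1) term
              have hcond : ∀ x : Fin N, ((x : ℕ) = k + 1) ↔ (x = ⟨k + 1, hm⟩) := by
                intro x; rw [Fin.ext_iff]
              rw [Finset.sum_congr rfl (fun x _ => by
                rw [mul_ite, mul_zero, if_congr (hcond x) rfl rfl])]
              rw [Finset.sum_ite_eq' Finset.univ (⟨k + 1, hm⟩ : Fin N)
                (fun x => A i x * (J k : ℂ))]
              simp
          · -- subdiagonal term, uses induction hypothesis for columns < k
            rw [Finset.sum_eq_single i]
            · by_cases hik : (i : ℕ) + 1 = k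
              · have hiv : (i : ℕ) < k + 1 := by omega
                have : A i i = c := by
                  have h := ih (i : ℕ) hiv i.isLt i
                  simpa using h
                simp [hik, this, mul_comm]
              · simp [hik]
            · intro x _ hxi
              by_cases hxk : (x : ℕ) + 1 = k
              · have hxv : (x : ℕ) < k + 1 := by omega
                have : A i x = 0 := by
                  have h := ih (x : ℕ) hxv x.isLt i
                  simp only [Fin.eta] at h
                  rw [h, if_neg (fun hc => hxi hc.symm)]
                simp [this]
              · simp [hxk]
            · intro h; exact absurd (Finset.mem_univ i) h
        -- isolate the unknown
        have hJk : (J k : ℂ) ≠ 0 := by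
          exact_mod_cast hJ k hm
        have hmain : A i ⟨k + 1, hm⟩ * (J k : ℂ) =
            (if (i : ℕ) = k + 1 then (J k : ℂ) else 0) * c := by
          have hRexp : H i ⟨k, hk⟩ * c =
              ((if i = ⟨k, hk⟩ then (B k : ℂ) else 0) +
               (if (i : ℕ) = k + 1 then (J k : ℂ) else 0) +
               (if (i : ℕ) + 1 = k then (J (i : ℕ) : ℂ) else 0)) * c := by
            rw [hHdef, triC_apply_col]
          have hfull := hL.symm.trans (hEq.trans (hR.trans hRexp))
          have h1 : (if i = ⟨k, hk⟩ then c else 0) * (B k : ℂ) =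
              (if i = ⟨k, hk⟩ then (B k : ℂ) else 0) * c := by split_ifs <;> ring
          have h3 : (if (i : ℕ) + 1 = k then c * (J (i : ℕ) : ℂ) else 0) =
              (if (i : ℕ) + 1 = k then (J (i : ℕ) : ℂ) else 0) * c := by split_ifs <;> ring
          linear_combination hfull - h1 - h3
        by_cases hik1 : (i : ℕ) = k + 1
        · have hieq : i = ⟨k + 1, hm⟩ := Fin.ext hik1
          rw [if_pos hieq]
          apply mul_right_cancel₀ hJk
          rw [hmain, if_pos hik1]; ring
        · have hineq : i ≠ ⟨k + 1, hm⟩ := fun h => hik1 (by rw [h])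
          rw [if_neg hineq]
          apply mul_right_cancel₀ hJk
          rw [hmain, if_neg hik1]; ring
  have hAeq : A = c • (1 : Matrix (Fin N) (Fin N) ℂ) := by
    ext i j
    have h := key (j : ℕ) j.isLt i
    simp only [Fin.eta] at h
    rw [h, Matrix.smul_apply, Matrix.one_apply]
    split_ifs <;> simp
  have hU1 : U = c • S := by
    have h : S * A = U := by rw [hAdef, ← mul_assoc, hSS, one_mul]
    rw [← h, hAeq, Matrix.mul_smul, mul_one]
  refine ⟨hU1, ?_⟩
  have h2 : (-(Complex.I * (2 * (t₀ : ℂ)))) • H =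
      (-(Complex.I * t₀)) • H + (-(Complex.I * t₀)) • H := by
    rw [← add_smul]; congr 1; ring
  rw [h2, Matrix.exp_add_of_commute (-(Complex.I * (t₀ : ℂ)) • H)
    (-(Complex.I * (t₀ : ℂ)) • H) (Commute.refl _), ← hUdef, hU1]
  rw [smul_mul_smul, hSS, ← Complex.exp_add]
  congr 1
  ring
end
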